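/- In the discrete chain-factorized causal model with sequential regressions B_k: (i) for every k ∈ {1, …, K+1}, B_k(x, z_{1:k−1}) = E[B_{k+1}(X, Z_{1:k}) ∣ X = x, Z_{1:k−1} = z_{1:k−1}, A = a_{Z_k}] (the conditioning event has positive probability by positivity of the kernels); (ii) B_1(x) = Σ_{z₁, …, z_{K+1}} z_{K+1}·∏_{k=1}^{K+1} f_k(z_k∣x, z_{1:k−1}, a_{Z_k}); and consequently (iii) ψ = Σ_x q(x)·π(a₁∣x)·B_1(x) + E[1{A = a₀}·Y], so the recursive pseudo-outcome regressions recover the identifying functional without any density estimation. -/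

import Mathlib

/-!
Discrete chain-factorized causal model: the observed vector is
`O = (X, A, Z₁, …, Z_K, Y)` with `A` binary (modeled by `Bool`, with `a₁ := !a₀`),
with joint pmf
`p(x,a,z₁,…,z_K,y) = q(x)·π(a∣x)·∏_{k=1}^K f_k(z_k∣x,z_{1:k−1},a)·f_{K+1}(y∣x,z_{1:K},a)`,
where all kernels are strictly positive pmfs; the outcome takes values in a nonempty
finite set `𝒴 ⊆ ℝ`.
-/

namespace ChainCausal

variable {K : ℕ}

/-- Embedding of the indices `j < k` into `Fin K`, for `k : Fin (K+1)`. -/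
def emb (k : Fin (K + 1)) (j : Fin (k : ℕ)) : Fin K :=
  Fin.castLE k.is_le j

/-- The type of prefixes `(z₁, …, z_{(k:ℕ)})`. -/
abbrev PrefAt (Zm : Fin K → Type) (k : Fin (K + 1)) : Type :=
  (j : Fin (k : ℕ)) → Zm (emb k j)

/-- Full mediator vectors `(z₁, …, z_K)`. -/
abbrev ZVec (Zm : Fin K → Type) : Type := ∀ j : Fin K, Zm j

/-- The prefix type `(z₁, …, z_{k−1})` appearing in the signature of the `k`-th mediator
kernel. -/
abbrev MedPref (Zm : Fin K → Type) (k : Fin K) : Type :=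
  (j : Fin (k : ℕ)) → Zm (Fin.castLE k.isLt.le j)

/-- Restriction of a full mediator vector to the prefix below a mediator index. -/
def medTake (Zm : Fin K → Type) (z : ZVec Zm) (k : Fin K) : MedPref Zm k :=
  fun j => z (Fin.castLE k.isLt.le j)

/-- Restriction of a full mediator vector to the prefix below `k : Fin (K+1)`. -/
def takeAt (Zm : Fin K → Type) (z : ZVec Zm) (k : Fin (K + 1)) : PrefAt Zm k :=
  fun j => z (emb k j)

/-- A discrete chain-factorized causal model: a strictly positive pmf `q` on covariates,
a strictly positive propensity `π(·∣x)` on `{0,1}`, strictly positive mediator kernels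
`f_k(·∣x,z_{1:k−1},a)` and a strictly positive outcome kernel `f_{K+1}(·∣x,z_{1:K},a)`. -/
structure Model (K : ℕ) (𝒳 : Type) [Fintype 𝒳] (Zm : Fin K → Type)
    [∀ k, Fintype (Zm k)] (𝒴 : Finset ℝ) : Type where
  q : 𝒳 → ℝ
  pi : Bool → 𝒳 → ℝ
  f : (k : Fin K) → 𝒳 → MedPref Zm k → Bool → Zm k → ℝ
  fY : 𝒳 → ZVec Zm → Bool → ↥𝒴 → ℝ
  q_pos : ∀ x, 0 < q x
  q_sum : ∑ x, q x = 1
  pi_pos : ∀ a x, 0 < pi a x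
  pi_sum : ∀ x, ∑ a, pi a x = 1
  f_pos : ∀ k x h a w, 0 < f k x h a w
  f_sum : ∀ k x h a, ∑ w, f k x h a w = 1
  fY_pos : ∀ x z a y, 0 < fY x z a y
  fY_sum : ∀ x z a, ∑ y, fY x z a y = 1

variable {𝒳 : Type} [Fintype 𝒳] {Zm : Fin K → Type} [∀ k, Fintype (Zm k)]
  {𝒴 : Finset ℝ}

/-- The joint pmf of `O = (X, A, Z₁, …, Z_K, Y)`. -/
def jointp (M : Model K 𝒳 Zm 𝒴) (x : 𝒳) (a : Bool) (z : ZVec Zm) (y : ↥𝒴) : ℝ :=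
  M.q x * M.pi a x * (∏ k, M.f k x (medTake Zm z k) a (z k)) * M.fY x z a y

/-- The `k`-th conditional kernel `f_k(z_k∣x,z_{1:k−1},a)` for `k : Fin (K+1)`
(a mediator kernel if `(k:ℕ) < K`, the outcome kernel if `(k:ℕ) = K`). -/
def ker (M : Model K 𝒳 Zm 𝒴) (k : Fin (K + 1)) (x : 𝒳) (z : ZVec Zm) (y : ↥𝒴)
    (a : Bool) : ℝ :=
  if h : (k : ℕ) < K then
    M.f ⟨(k : ℕ), h⟩ x (medTake Zm z ⟨(k : ℕ), h⟩) a (z ⟨(k : ℕ), h⟩)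
  else M.fY x z a y

/-- The target functional
`ψ := Σ_x q(x)·π(a₁∣x)·Σ_{z,y} y·∏_{k=1}^{K+1} f_k(z_k∣x,z_{1:k−1},a_{Z_k}) + E[1{A = a₀}·Y]`,
where `a₁ = !a₀` and `aZ` are the fixed treatment labels. -/
def psi (M : Model K 𝒳 Zm 𝒴) (aZ : Fin (K + 1) → Bool) (a0 : Bool) : ℝ :=
  (∑ x, M.q x * M.pi (!a0) x *
      ∑ z : ZVec Zm, ∑ y : ↥𝒴, (y : ℝ) * ∏ k, ker M k x z y (aZ k)) +
    ∑ x, ∑ a, ∑ z : ZVec Zm, ∑ y : ↥𝒴,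
      jointp M x a z y * (if a = a0 then (y : ℝ) else 0)

/-- The sequential regressions, in descending-counter form: `Bdesc M aZ t x z y`
is `B_{K+2−t}(x, z_{1:K+1−t})`, where `B_{K+2}(x,z_{1:K+1}) := z_{K+1}` and
`B_k(x,z_{1:k−1}) := Σ_{z_k} f_k(z_k∣x,z_{1:k−1},a_{Z_k})·B_{k+1}(x,z_{1:k})`. -/
def Bdesc (M : Model K 𝒳 Zm 𝒴) (aZ : Fin (K + 1) → Bool) :
    ℕ → 𝒳 → ZVec Zm → ↥𝒴 → ℝ
  | 0, _x, _z, y => (y : ℝ)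
  | 1, x, z, _y => ∑ y' : ↥𝒴, M.fY x z (aZ (Fin.last K)) y' * (y' : ℝ)
  | d + 2, x, z, y =>
    if h : K - (d + 1) < K then
      ∑ w : Zm ⟨K - (d + 1), h⟩,
        M.f ⟨K - (d + 1), h⟩ x (medTake Zm z ⟨K - (d + 1), h⟩)
            (aZ (Fin.castSucc ⟨K - (d + 1), h⟩)) w *
          Bdesc M aZ (d + 1) x (Function.update z ⟨K - (d + 1), h⟩ w) y
    else Bdesc M aZ (d + 1) x z y

section AuxProof
set_option linter.unusedSectionVars false

variable [∀ k, DecidableEq (Zm k)]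

/-- prefix-match indicator. -/
def Ind (k : Fin (K + 1)) (z z' : ZVec Zm) : ℝ :=
  if takeAt Zm z' k = takeAt Zm z k then (1 : ℝ) else 0

/-- per-coordinate-treatment weight. -/
def Wgt (M : Model K 𝒳 Zm 𝒴) (b : Fin (K + 1) → Bool) (x : 𝒳) (z : ZVec Zm) (y : ↥𝒴) : ℝ :=
  (∏ j : Fin K, M.f j x (medTake Zm z j) (b j.castSucc) (z j)) * M.fY x z (b (Fin.last K)) y

/-- prefix product. -/
def PrefB (M : Model K 𝒳 Zm 𝒴) (b : Fin (K + 1) → Bool) (k : Fin (K + 1)) (x : 𝒳)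
    (z : ZVec Zm) : ℝ :=
  ∏ j : Fin K, if (j : ℕ) < (k : ℕ) then M.f j x (medTake Zm z j) (b j.castSucc) (z j) else 1

lemma jointp_eq (M : Model K 𝒳 Zm 𝒴) (a : Bool) (x : 𝒳) (z : ZVec Zm) (y : ↥𝒴) :
    jointp M x a z y = M.q x * M.pi a x * Wgt M (fun _ => a) x z y := by
  unfold jointp Wgt; ring

lemma takeAt_last (z : ZVec Zm) : takeAt Zm z (Fin.last K) = z := rfl

lemma Ind_last (z z' : ZVec Zm) : Ind (Fin.last K) z z' = if z' = z then (1 : ℝ) else 0 := by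
  unfold Ind
  exact if_congr (by rw [takeAt_last, takeAt_last]; exact Iff.rfl) rfl rfl

lemma Ind_zero (h : (0 : ℕ) < K + 1) (z z' : ZVec Zm) : Ind ⟨0, h⟩ z z' = 1 := by
  unfold Ind
  rw [if_pos]
  exact funext fun j => j.elim0

lemma takeAt_succ_iff (i : Fin K) (z' u : ZVec Zm) :
    takeAt Zm z' i.succ = takeAt Zm u i.succ ↔
      takeAt Zm z' i.castSucc = takeAt Zm u i.castSucc ∧ z' i = u i := by
  constructor
  · intro h
    refine ⟨funext fun j => ?_, ?_⟩
    · exact congrFun h (Fin.castSucc j)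
    · exact congrFun h (Fin.last (i : ℕ))
  · rintro ⟨h1, h2⟩
    funext j
    induction j using Fin.lastCases with
    | last => exact h2
    | cast j => exact congrFun h1 j

lemma takeAt_update_castSucc (i : Fin K) (z : ZVec Zm) (w : Zm i) :
    takeAt Zm (Function.update z i w) i.castSucc = takeAt Zm z i.castSucc :=
  funext fun j => by
    have hne : emb i.castSucc j ≠ i := Fin.ne_of_val_ne (Nat.ne_of_lt j.isLt)
    show Function.update z i w (emb i.castSucc j) = z (emb i.castSucc j)
    exact Function.update_of_ne hne w z

lemma Ind_succ (i : Fin K) (z z' : ZVec Zm) :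
    Ind i.castSucc z z' = ∑ w : Zm i, Ind i.succ (Function.update z i w) z' := by
  have key : ∀ w : Zm i, Ind i.succ (Function.update z i w) z'
      = if (takeAt Zm z' i.castSucc = takeAt Zm z i.castSucc ∧ z' i = w) then (1 : ℝ) else 0 := by
    intro w
    unfold Ind
    refine if_congr ?_ rfl rfl
    rw [takeAt_succ_iff, takeAt_update_castSucc, Function.update_self]
  simp only [key]
  by_cases hP : takeAt Zm z' i.castSucc = takeAt Zm z i.castSucc
  · simp [Ind, hP, Finset.sum_ite_eq, Finset.mem_univ]
  · simp [Ind, hP]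

lemma medTake_update_of_le (z : ZVec Zm) (i j : Fin K) (h : (j : ℕ) ≤ (i : ℕ)) (w : Zm i) :
    medTake Zm (Function.update z i w) j = medTake Zm z j :=
  funext fun m => by
    have hne : Fin.castLE j.isLt.le m ≠ i :=
      Fin.ne_of_val_ne (Nat.ne_of_lt (lt_of_lt_of_le m.isLt h))
    show Function.update z i w (Fin.castLE j.isLt.le m) = z (Fin.castLE j.isLt.le m)
    exact Function.update_of_ne hne w z

lemma medTake_congr (z₁ z₂ : ZVec Zm) (j : Fin K)
    (h : ∀ m : Fin K, (m : ℕ) < (j : ℕ) → z₁ m = z₂ m) :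
    medTake Zm z₁ j = medTake Zm z₂ j :=
  funext fun m => h _ m.isLt

lemma PrefB_last (M : Model K 𝒳 Zm 𝒴) (b : Fin (K + 1) → Bool) (x : 𝒳) (z : ZVec Zm) :
    PrefB M b (Fin.last K) x z
      = ∏ j, M.f j x (medTake Zm z j) (b j.castSucc) (z j) :=
  Finset.prod_congr rfl fun j _ => if_pos j.isLt

lemma PrefB_zero (M : Model K 𝒳 Zm 𝒴) (b : Fin (K + 1) → Bool) (h : (0:ℕ) < K + 1)
    (x : 𝒳) (z : ZVec Zm) : PrefB M b ⟨0, h⟩ x z = 1 :=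
  Finset.prod_eq_one fun j _ => if_neg (Nat.not_lt_zero _)

lemma PrefB_pos (M : Model K 𝒳 Zm 𝒴) (b : Fin (K + 1) → Bool) (k : Fin (K + 1)) (x : 𝒳)
    (z : ZVec Zm) : 0 < PrefB M b k x z :=
  Finset.prod_pos fun j _ => by
    split
    · exact M.f_pos _ _ _ _ _
    · exact one_pos

lemma PrefB_succ (M : Model K 𝒳 Zm 𝒴) (b : Fin (K + 1) → Bool) (x : 𝒳) (i : Fin K)
    (z : ZVec Zm) (w : Zm i) :
    PrefB M b i.succ x (Function.update z i w)
      = PrefB M b i.castSucc x z * M.f i x (medTake Zm z i) (b i.castSucc) w := by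
  unfold PrefB
  rw [← Finset.prod_erase_mul Finset.univ _ (Finset.mem_univ i),
      ← Finset.prod_erase_mul Finset.univ _ (Finset.mem_univ i)]
  have h1 : (if (i : ℕ) < (i.succ : ℕ) then
      M.f i x (medTake Zm (Function.update z i w) i) (b i.castSucc) (Function.update z i w i)
      else 1) = M.f i x (medTake Zm z i) (b i.castSucc) w := by
    rw [if_pos (by simp [Fin.val_succ]), medTake_update_of_le z i i le_rfl w,
      Function.update_self]
  have h2 : (if (i : ℕ) < (i.castSucc : ℕ) then
      M.f i x (medTake Zm z i) (b i.castSucc) (z i) else 1) = 1 :=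
    if_neg (by simp)
  rw [h1, h2, mul_one]
  congr 1
  refine Finset.prod_congr rfl fun j hj => ?_
  have hji : j ≠ i := (Finset.mem_erase.mp hj).1
  by_cases hlt : (j : ℕ) < (i : ℕ)
  · rw [if_pos (by simp only [Fin.val_succ]; omega),
      if_pos (by simpa using hlt),
      medTake_update_of_le z i j (le_of_lt hlt) w,
      Function.update_of_ne hji w z]
  · have hv : (j : ℕ) ≠ (i : ℕ) := fun hh => hji (Fin.ext hh)
    rw [if_neg (by simp only [Fin.val_succ]; omega), if_neg (by simpa using hlt)]

lemma sum_swap3 {α β γ : Type*} [Fintype α] [Fintype β] [Fintype γ] (F : α → β → γ → ℝ) :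
    ∑ a, ∑ b, ∑ c, F a b c = ∑ c, ∑ a, ∑ b, F a b c := by
  calc ∑ a, ∑ b, ∑ c, F a b c = ∑ a, ∑ c, ∑ b, F a b c :=
        Finset.sum_congr rfl fun a _ => Finset.sum_comm
    _ = ∑ c, ∑ a, ∑ b, F a b c := Finset.sum_comm

lemma sum_ind_last (z : ZVec Zm) (F H : ZVec Zm → ↥𝒴 → ℝ) :
    ∑ z' : ZVec Zm, ∑ y' : ↥𝒴, F z' y' * Ind (Fin.last K) z z' * H z' y'
      = ∑ y' : ↥𝒴, F z y' * H z y' := by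
  have e : ∀ z' : ZVec Zm, (∑ y' : ↥𝒴, F z' y' * Ind (Fin.last K) z z' * H z' y')
      = if z' = z then ∑ y' : ↥𝒴, F z' y' * H z' y' else 0 := by
    intro z'
    by_cases h : z' = z
    · simp [Ind_last, h]
    · simp [Ind_last, h]
  rw [Finset.sum_congr rfl fun z' _ => e z', Finset.sum_ite_eq' Finset.univ z
    (fun z' => ∑ y' : ↥𝒴, F z' y' * H z' y')]
  simp

lemma sum_ind_step (i : Fin K) (z : ZVec Zm) (F H : ZVec Zm → ↥𝒴 → ℝ) :
    ∑ z' : ZVec Zm, ∑ y' : ↥𝒴, F z' y' * Ind i.castSucc z z' * H z' y'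
      = ∑ w : Zm i, ∑ z' : ZVec Zm, ∑ y' : ↥𝒴,
          F z' y' * Ind i.succ (Function.update z i w) z' * H z' y' := by
  have e : ∀ (z' : ZVec Zm) (y' : ↥𝒴), F z' y' * Ind i.castSucc z z' * H z' y'
      = ∑ w : Zm i, F z' y' * Ind i.succ (Function.update z i w) z' * H z' y' := by
    intro z' y'; rw [Ind_succ, Finset.mul_sum, Finset.sum_mul]
  simp only [e]
  exact sum_swap3 _

lemma sum_W_y (M : Model K 𝒳 Zm 𝒴) (b : Fin (K + 1) → Bool) (x : 𝒳) (z : ZVec Zm) :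
    ∑ y' : ↥𝒴, Wgt M b x z y'
      = ∏ j, M.f j x (medTake Zm z j) (b j.castSucc) (z j) := by
  unfold Wgt; rw [← Finset.mul_sum, M.fY_sum, mul_one]
lemma Bdesc_y (M : Model K 𝒳 Zm 𝒴) (aZ : Fin (K + 1) → Bool) :
    ∀ (d : ℕ), 1 ≤ d → ∀ (x : 𝒳) (z : ZVec Zm) (y₁ y₂ : ↥𝒴),
      Bdesc M aZ d x z y₁ = Bdesc M aZ d x z y₂ := by
  intro d
  induction d with
  | zero => omega
  | succ d ih =>
    intro _ x z y₁ y₂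
    cases d with
    | zero => simp [Bdesc]
    | succ d' =>
      simp only [Bdesc]
      split
      · exact Finset.sum_congr rfl fun w _ => by rw [ih (by omega) x _ y₁ y₂]
      · exact ih (by omega) x z y₁ y₂

lemma Bdesc_prefix (M : Model K 𝒳 Zm 𝒴) (aZ : Fin (K + 1) → Bool) :
    ∀ (d : ℕ), 1 ≤ d → ∀ (x : 𝒳) (z₁ z₂ : ZVec Zm) (y : ↥𝒴),
      (∀ j : Fin K, (j : ℕ) < K + 1 - d → z₁ j = z₂ j) →
      Bdesc M aZ d x z₁ y = Bdesc M aZ d x z₂ y := by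
  intro d
  induction d with
  | zero => omega
  | succ d ih =>
    intro _ x z₁ z₂ y hz
    cases d with
    | zero =>
      have : z₁ = z₂ := funext fun j => hz j (by omega)
      rw [this]
    | succ d' =>
      simp only [Bdesc]
      by_cases h : K - (d' + 1) < K
      · rw [dif_pos h, dif_pos h]
        refine Finset.sum_congr rfl fun w _ => ?_
        have hm : medTake Zm z₁ ⟨K - (d' + 1), h⟩ = medTake Zm z₂ ⟨K - (d' + 1), h⟩ :=
          medTake_congr z₁ z₂ _ fun m hmlt => hz m (by
            have hmv : (m : ℕ) < K - (d' + 1) := hmlt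
            omega)
        rw [hm]
        congr 1
        refine ih (by omega) x _ _ y fun j hj => ?_
        by_cases hji : j = ⟨K - (d' + 1), h⟩
        · subst hji; rw [Function.update_self, Function.update_self]
        · rw [Function.update_of_ne hji, Function.update_of_ne hji]
          refine hz j ?_
          have : (j : ℕ) ≠ K - (d' + 1) := fun hc => hji (Fin.ext hc)
          omega
      · rw [dif_neg h, dif_neg h]
        have hK : K = 0 := by omega
        have : z₁ = z₂ := funext fun j => absurd j.isLt (by omega)
        rw [this]
lemma G_master (M : Model K 𝒳 Zm 𝒴) (x : 𝒳) (y0 : ↥𝒴) :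
    ∀ (d : ℕ), d ≤ K → ∀ (k : Fin (K + 1)), (k : ℕ) = K - d →
    ∀ (b : Fin (K + 1) → Bool) (z : ZVec Zm) (H : ZVec Zm → ↥𝒴 → ℝ),
    (∀ z₁ z₂ y, (∀ j : Fin K, (j : ℕ) < K - d → z₁ j = z₂ j) → H z₁ y = H z₂ y) →
    (∀ z' (y₁ y₂ : ↥𝒴), H z' y₁ = H z' y₂) →
    ∑ z' : ZVec Zm, ∑ y' : ↥𝒴, Wgt M b x z' y' * Ind k z z' * H z' y'
      = PrefB M b k x z * H z y0 := by
  intro d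
  induction d with
  | zero =>
    intro _ k hk b z H hH hHy
    have hkl : k = Fin.last K := Fin.ext (by simpa using hk)
    subst hkl
    rw [sum_ind_last z (Wgt M b x) H]
    calc ∑ y' : ↥𝒴, Wgt M b x z y' * H z y'
        = ∑ y' : ↥𝒴, Wgt M b x z y' * H z y0 :=
          Finset.sum_congr rfl fun y' _ => by rw [hHy z y' y0]
      _ = (∑ y' : ↥𝒴, Wgt M b x z y') * H z y0 := by rw [Finset.sum_mul]
      _ = PrefB M b (Fin.last K) x z * H z y0 := by rw [sum_W_y, PrefB_last]
  | succ d ih =>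
    intro hd k hk b z H hH hHy
    have hiK : K - (d + 1) < K := by omega
    set i : Fin K := ⟨K - (d + 1), hiK⟩ with hi
    have hkc : k = i.castSucc := Fin.ext (by simpa using hk)
    subst hkc
    rw [sum_ind_step i z (Wgt M b x) H]
    have hev : ∀ w : Zm i,
        ∑ z' : ZVec Zm, ∑ y' : ↥𝒴,
            Wgt M b x z' y' * Ind i.succ (Function.update z i w) z' * H z' y'
          = PrefB M b i.castSucc x z * H z y0
              * M.f i x (medTake Zm z i) (b i.castSucc) w := by
      intro w
      rw [ih (by omega) i.succ (by simp [Fin.val_succ, hi]; omega) b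
        (Function.update z i w) H
        (fun z₁ z₂ y h => hH z₁ z₂ y fun j hj => h j (by omega)) hHy]
      rw [PrefB_succ]
      have hHu : H (Function.update z i w) y0 = H z y0 := by
        refine hH _ _ y0 fun j hj => ?_
        refine Function.update_of_ne (fun hji : j = i => ?_) w z
        rw [hji] at hj
        exact absurd hj (by simp [hi])
      rw [hHu]; ring
    rw [Finset.sum_congr rfl fun w _ => hev w, ← Finset.mul_sum, M.f_sum, mul_one]
lemma G2_master (M : Model K 𝒳 Zm 𝒴) (aZ : Fin (K + 1) → Bool) (x : 𝒳) :
    ∀ (d : ℕ), 1 ≤ d → d ≤ K + 1 → ∀ (k : Fin (K + 1)), (k : ℕ) = K + 1 - d →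
    ∀ (z : ZVec Zm) (y : ↥𝒴),
    ∑ z' : ZVec Zm, ∑ y' : ↥𝒴, Wgt M aZ x z' y' * Ind k z z' * (y' : ℝ)
      = PrefB M aZ k x z * Bdesc M aZ d x z y := by
  intro d
  induction d with
  | zero => omega
  | succ d ih =>
    intro _ h2 k hk z y
    rcases Nat.eq_zero_or_pos d with rfl | hd
    · have hkl : k = Fin.last K := Fin.ext (by simpa using hk)
      subst hkl
      rw [sum_ind_last z (Wgt M aZ x) (fun _ y' => (y' : ℝ))]
      have : ∀ y' : ↥𝒴, Wgt M aZ x z y' * (y' : ℝ)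
          = (∏ j, M.f j x (medTake Zm z j) (aZ j.castSucc) (z j))
              * (M.fY x z (aZ (Fin.last K)) y' * (y' : ℝ)) := by
        intro y'; unfold Wgt; ring
      rw [Finset.sum_congr rfl fun y' _ => this y', ← Finset.mul_sum, PrefB_last]
      simp [Bdesc]
    · obtain ⟨d', rfl⟩ : ∃ d', d = d' + 1 := ⟨d - 1, by omega⟩
      have hiK : K - (d' + 1) < K := by omega
      set i : Fin K := ⟨K - (d' + 1), hiK⟩ with hi
      have hkc : k = i.castSucc := Fin.ext (by simp [hi]; omega)
      subst hkc
      rw [sum_ind_step i z (Wgt M aZ x) (fun _ y' => (y' : ℝ))]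
      have hev : ∀ w : Zm i,
          ∑ z' : ZVec Zm, ∑ y' : ↥𝒴,
              Wgt M aZ x z' y' * Ind i.succ (Function.update z i w) z' * (y' : ℝ)
            = PrefB M aZ i.castSucc x z
                * (M.f i x (medTake Zm z i) (aZ i.castSucc) w
                    * Bdesc M aZ (d' + 1) x (Function.update z i w) y) := by
        intro w
        rw [ih (by omega) (by omega) i.succ (by simp [Fin.val_succ, hi]; omega)
          (Function.update z i w) y]
        rw [PrefB_succ]
        ring
      rw [Finset.sum_congr rfl fun w _ => hev w, ← Finset.mul_sum]
      congr 1
      show _ = Bdesc M aZ (d' + 1 + 1) x z y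
      simp only [Bdesc]
      rw [dif_pos hiK]

lemma prod_ker (M : Model K 𝒳 Zm 𝒴) (aZ : Fin (K + 1) → Bool) (x : 𝒳)
    (z' : ZVec Zm) (y' : ↥𝒴) :
    ∏ k : Fin (K + 1), ker M k x z' y' (aZ k) = Wgt M aZ x z' y' := by
  rw [Fin.prod_univ_castSucc]
  unfold Wgt
  congr 1
  · refine Finset.prod_congr rfl fun i _ => ?_
    unfold ker
    rw [dif_pos (show ((i.castSucc : Fin (K + 1)) : ℕ) < K from i.isLt)]
    simp only [Fin.coe_castSucc, Fin.eta]
  · unfold ker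
    rw [dif_neg (show ¬ ((Fin.last K : Fin (K + 1)) : ℕ) < K by simp)]
end AuxProof

/-- with `B_k` the sequential regressions (`B_k = Bdesc (K+2−k)` in
descending-counter form, for 1-indexed `k`; here `k : Fin (K+1)` stands for the
1-indexed level `k+1`):
(i) `B_k(x,z_{1:k−1}) = E[B_{k+1}(X,Z_{1:k}) ∣ X = x, Z_{1:k−1} = z_{1:k−1}, A = a_{Z_k}]`,
and the conditioning event has positive probability;
(ii) `B_1(x) = Σ_{z,y} y·∏_{k=1}^{K+1} f_k(z_k∣x,z_{1:k−1},a_{Z_k})`;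
(iii) `ψ = Σ_x q(x)·π(a₁∣x)·B_1(x) + E[1{A=a₀}·Y]`. -/
theorem statement_1 [Nonempty 𝒳] [∀ k, Nonempty (Zm k)] [∀ k, DecidableEq (Zm k)]
    (h𝒴 : 𝒴.Nonempty) (M : Model K 𝒳 Zm 𝒴) (aZ : Fin (K + 1) → Bool) (a0 : Bool) :
    (∀ (k : Fin (K + 1)) (x : 𝒳) (z : ZVec Zm) (y : ↥𝒴),
        0 < (∑ z' : ZVec Zm, ∑ y' : ↥𝒴, jointp M x (aZ k) z' y' *
              (if takeAt Zm z' k = takeAt Zm z k then (1 : ℝ) else 0)) ∧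
        Bdesc M aZ (K + 1 - (k : ℕ)) x z y =
          (∑ z' : ZVec Zm, ∑ y' : ↥𝒴, jointp M x (aZ k) z' y' *
              (if takeAt Zm z' k = takeAt Zm z k then (1 : ℝ) else 0) *
              Bdesc M aZ (K - (k : ℕ)) x z' y') /
            (∑ z' : ZVec Zm, ∑ y' : ↥𝒴, jointp M x (aZ k) z' y' *
              (if takeAt Zm z' k = takeAt Zm z k then (1 : ℝ) else 0))) ∧
    (∀ (x : 𝒳) (z : ZVec Zm) (y : ↥𝒴),
        Bdesc M aZ (K + 1) x z y =
          ∑ z' : ZVec Zm, ∑ y' : ↥𝒴, (y' : ℝ) * ∏ k, ker M k x z' y' (aZ k)) ∧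
    (∀ (z : ZVec Zm) (y : ↥𝒴),
        psi M aZ a0 =
          (∑ x, M.q x * M.pi (!a0) x * Bdesc M aZ (K + 1) x z y) +
            ∑ x, ∑ a, ∑ z' : ZVec Zm, ∑ y' : ↥𝒴,
              jointp M x a z' y' * (if a = a0 then (y' : ℝ) else 0)) := by
  obtain ⟨yv, hyv⟩ := h𝒴
  set y0 : ↥𝒴 := ⟨yv, hyv⟩ with hy0
  -- denominator evaluation
  have hden : ∀ (k : Fin (K + 1)) (x : 𝒳) (z : ZVec Zm),
      (∑ z' : ZVec Zm, ∑ y' : ↥𝒴, jointp M x (aZ k) z' y' *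
        (if takeAt Zm z' k = takeAt Zm z k then (1 : ℝ) else 0))
      = M.q x * M.pi (aZ k) x * PrefB M (fun _ => aZ k) k x z := by
    intro k x z
    have hG := G_master M x y0 (K - (k : ℕ)) (by omega) k (by omega) (fun _ => aZ k) z
        (fun _ _ => (1 : ℝ)) (fun _ _ _ _ => rfl) (fun _ _ _ => rfl)
    simp only [mul_one] at hG
    have e : ∀ (z' : ZVec Zm) (y' : ↥𝒴), jointp M x (aZ k) z' y' *
        (if takeAt Zm z' k = takeAt Zm z k then (1 : ℝ) else 0)
        = M.q x * M.pi (aZ k) x * (Wgt M (fun _ => aZ k) x z' y' * Ind k z z') := by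
      intro z' y'; rw [jointp_eq]; unfold Ind; ring
    simp only [e, ← Finset.mul_sum]
    rw [hG]
  -- positivity
  have hpos : ∀ (k : Fin (K + 1)) (x : 𝒳) (z : ZVec Zm),
      0 < M.q x * M.pi (aZ k) x * PrefB M (fun _ => aZ k) k x z :=
    fun k x z => mul_pos (mul_pos (M.q_pos x) (M.pi_pos _ x)) (PrefB_pos M _ k x z)
  -- numerator evaluation
  have hnum : ∀ (k : Fin (K + 1)) (x : 𝒳) (z : ZVec Zm) (y : ↥𝒴),
      (∑ z' : ZVec Zm, ∑ y' : ↥𝒴, jointp M x (aZ k) z' y' *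
        (if takeAt Zm z' k = takeAt Zm z k then (1 : ℝ) else 0) *
        Bdesc M aZ (K - (k : ℕ)) x z' y')
      = (M.q x * M.pi (aZ k) x * PrefB M (fun _ => aZ k) k x z)
          * Bdesc M aZ (K + 1 - (k : ℕ)) x z y := by
    intro k x z y
    have e : ∀ (z' : ZVec Zm) (y' : ↥𝒴), jointp M x (aZ k) z' y' *
        (if takeAt Zm z' k = takeAt Zm z k then (1 : ℝ) else 0) *
        Bdesc M aZ (K - (k : ℕ)) x z' y'
        = M.q x * M.pi (aZ k) x *
            (Wgt M (fun _ => aZ k) x z' y' * Ind k z z'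
              * Bdesc M aZ (K - (k : ℕ)) x z' y') := by
      intro z' y'; rw [jointp_eq]; unfold Ind; ring
    simp only [e, ← Finset.mul_sum]
    by_cases hkK : (k : ℕ) = K
    · -- last level
      have hkl : k = Fin.last K := Fin.ext (by simpa using hkK)
      subst hkl
      rw [sum_ind_last z (Wgt M (fun _ => aZ (Fin.last K)) x)
        (fun z' y' => Bdesc M aZ (K - ((Fin.last K : Fin (K + 1)) : ℕ)) x z' y')]
      simp only [Fin.val_last, Nat.sub_self]
      have h1 : K + 1 - K = 1 := by omega
      rw [h1]
      simp only [Bdesc, PrefB_last]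
      have e2 : ∀ y' : ↥𝒴, Wgt M (fun _ => aZ (Fin.last K)) x z y' * (y' : ℝ)
          = (∏ j, M.f j x (medTake Zm z j) (aZ (Fin.last K)) (z j))
              * (M.fY x z (aZ (Fin.last K)) y' * (y' : ℝ)) := by
        intro y'; simp only [Wgt]; ring
      rw [Finset.sum_congr rfl fun y' _ => e2 y', ← Finset.mul_sum]
      ring
    · -- interior level
      have hkK' : (k : ℕ) < K := lt_of_le_of_ne (by omega) hkK
      set i : Fin K := ⟨(k : ℕ), hkK'⟩ with hi
      have hkc : k = i.castSucc := Fin.ext (by simp [hi])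
      rw [hkc]
      simp only [Fin.coe_castSucc]
      have hii : (i : ℕ) = (k : ℕ) := by rw [hi]
      have hiK := i.isLt
      rw [sum_ind_step i z (Wgt M (fun _ => aZ i.castSucc) x)
        (fun z' y' => Bdesc M aZ (K - (i : ℕ)) x z' y')]
      have hev : ∀ w : Zm i,
          ∑ z' : ZVec Zm, ∑ y' : ↥𝒴,
              Wgt M (fun _ => aZ i.castSucc) x z' y' * Ind i.succ (Function.update z i w) z'
                * Bdesc M aZ (K - (i : ℕ)) x z' y'
            = PrefB M (fun _ => aZ i.castSucc) i.castSucc x z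
                * (M.f i x (medTake Zm z i) (aZ i.castSucc) w
                    * Bdesc M aZ (K - (i : ℕ)) x (Function.update z i w) y) := by
        intro w
        rw [G_master M x y0 (K - ((i : ℕ) + 1)) (by omega) i.succ
          (by simp [Fin.val_succ]; omega) (fun _ => aZ i.castSucc)
          (Function.update z i w) (fun z' y' => Bdesc M aZ (K - (i : ℕ)) x z' y')
          (fun z₁ z₂ yy hc => Bdesc_prefix M aZ (K - (i : ℕ)) (by omega) x z₁ z₂ yy
            (fun j hj => hc j (by omega)))
          (fun z' y₁ y₂ => Bdesc_y M aZ (K - (i : ℕ)) (by omega) x z' y₁ y₂)]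
        rw [PrefB_succ]
        rw [Bdesc_y M aZ (K - (i : ℕ)) (by omega) x (Function.update z i w) y0 y]
        ring
      rw [Finset.sum_congr rfl fun w _ => hev w, ← Finset.mul_sum]
      have hd2 : K + 1 - (i : ℕ) = (K - (i : ℕ) - 1) + 2 := by omega
      rw [hd2]
      simp only [Bdesc]
      have hc : K - (K - (i : ℕ) - 1 + 1) < K := by omega
      rw [dif_pos hc]
      have hidx : (⟨K - (K - (i : ℕ) - 1 + 1), hc⟩ : Fin K) = i := Fin.ext (by simp; omega)
      rw [hidx]
      have hc2 : K - (i : ℕ) - 1 + 1 = K - (i : ℕ) := by omega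
      rw [hc2, ← hii]
      ring
  -- part (ii)
  have hII : ∀ (x : 𝒳) (z : ZVec Zm) (y : ↥𝒴),
      Bdesc M aZ (K + 1) x z y =
        ∑ z' : ZVec Zm, ∑ y' : ↥𝒴, (y' : ℝ) * ∏ k, ker M k x z' y' (aZ k) := by
    intro x z y
    have h0 : (0 : ℕ) < K + 1 := by omega
    have hG2 := G2_master M aZ x (K + 1) (by omega) (by omega) ⟨0, h0⟩
      (by simp) z y
    rw [PrefB_zero M aZ h0 x z, one_mul] at hG2
    rw [← hG2]
    refine Finset.sum_congr rfl fun z' _ => Finset.sum_congr rfl fun y' _ => ?_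
    rw [prod_ker M aZ x z' y', Ind_zero h0 z z']
    ring
  refine ⟨fun k x z y => ⟨?_, ?_⟩, hII, ?_⟩
  · rw [hden k x z]
    exact hpos k x z
  · rw [hnum k x z y, hden k x z]
    exact (mul_div_cancel_left₀ _ (ne_of_gt (hpos k x z))).symm
  · intro z y
    unfold psi
    congr 1
    refine Finset.sum_congr rfl fun x _ => ?_
    rw [hII x z y]

end ChainCausal
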